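/- For any n ≥ 1, any X₁,...,X_n ∈ ℂ, and any choice ε₁,...,ε_n ∈ {0,1}: Tr(∏_{j=1}^{n} A_{X_j}·Ω_{ε_j}) = ±(∏_{j=1}^{n} X_j*) + R, where X_j* = X_j + h(ε_j) + k(ε_{j-1}) (indices mod n) with h(0)=1, h(1)=0, k(0)=0, k(1)=1, and R is a polynomial in X₁,...,X_n of total degree at most n-2 and of degree at most 1 in each X_j. -/

import Mathlib

open Matrix Polynomial

namespace NoScc

def cr (e : Fin 2) : Matrix (Fin 2) (Fin 2) ℂ :=
  if e = 0 then !![1, 0; 0, 0] else !![1, -1; 0, 0]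

def Bm (e : Fin 2) : Matrix (Fin 2) (Fin 2) ℂ :=
  if e = 0 then !![1, -1; -1, 0] else !![0, -1; -1, 1]

noncomputable def Nt (e : Fin 2) : Matrix (Fin 2) (Fin 2) (Polynomial ℂ) :=
  if e = 0 then !![X + 1, -1; -1, 0] else !![X, -X - 1; -1, 1]

noncomputable def topM (es : List (Fin 2)) : Matrix (Fin 2) (Fin 2) ℂ :=
  match es.getLast? with
  | none => 1
  | some e => cr e

def ccv (a b : Fin 2) : ℂ :=
  (if b = 0 then 1 else 0) + (if a = 0 then 0 else 1)

lemma nt_deg (e : Fin 2) (a b : Fin 2) : (Nt e a b).natDegree ≤ 1 := by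
  fin_cases e <;> fin_cases a <;> fin_cases b <;>
    simp [Nt] <;> compute_degree

lemma nt_coeff1 (e : Fin 2) (a b : Fin 2) : (Nt e a b).coeff 1 = cr e a b := by
  fin_cases e <;> fin_cases a <;> fin_cases b <;>
    simp [Nt, cr, coeff_one]

lemma cr_mul_cr (e f : Fin 2) : cr e * cr f = cr f := by
  fin_cases e <;> fin_cases f <;>
    · ext i j
      fin_cases i <;> fin_cases j <;> simp [cr, Matrix.mul_apply, Fin.sum_univ_two]

lemma cr_mul_topM (e : Fin 2) (es : List (Fin 2)) :
    cr e * topM es = topM (e :: es) := by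
  rcases h : es.getLast? with _ | f
  · rw [List.getLast?_eq_none_iff] at h
    subst h
    simp [topM]
  · have hne : es ≠ [] := by rintro rfl; simp at h
    have h2 : (e :: es).getLast? = some f := by
      rw [List.getLast?_cons, h]; rfl
    simp [topM, h, h2, cr_mul_cr]

lemma chain_deg (es : List (Fin 2)) (a b : Fin 2) :
    ((es.map Nt).prod a b).natDegree ≤ es.length := by
  induction es generalizing a b with
  | nil => simp [Matrix.one_apply]; split <;> simp
  | cons e es ih =>
    simp only [List.map_cons, List.prod_cons, Matrix.mul_apply, Fin.sum_univ_two,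
      List.length_cons]
    apply (natDegree_add_le _ _).trans
    simp only [sup_le_iff]
    refine ⟨natDegree_mul_le.trans ?_, natDegree_mul_le.trans ?_⟩
    · have h1 := nt_deg e a 0; have h2 := ih 0 b; omega
    · have h1 := nt_deg e a 1; have h2 := ih 1 b; omega

lemma chain_top (es : List (Fin 2)) (a b : Fin 2) :
    ((es.map Nt).prod a b).coeff es.length = topM es a b := by
  induction es generalizing a b with
  | nil => simp [topM, Matrix.one_apply]; split <;> simp
  | cons e es ih =>
    simp only [List.map_cons, List.prod_cons, Matrix.mul_apply, Fin.sum_univ_two,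
      List.length_cons]
    have hlen : es.length + 1 = 1 + es.length := by omega
    rw [coeff_add, hlen,
      coeff_mul_add_eq_of_natDegree_le (nt_deg e a 0) (chain_deg es 0 b),
      coeff_mul_add_eq_of_natDegree_le (nt_deg e a 1) (chain_deg es 1 b),
      nt_coeff1, nt_coeff1, ih, ih, ← cr_mul_topM]
    simp [Matrix.mul_apply, Fin.sum_univ_two]

def prevOf (es1 es2 : List (Fin 2)) (f : Fin 2) : Fin 2 :=
  (es1.getLast?).getD ((es2.getLast?).getD f)

lemma tr_topBm (es1 es2 : List (Fin 2)) (f : Fin 2) :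
    Matrix.trace (topM es1 * Bm f * topM es2) = ccv (prevOf es1 es2 f) f := by
  rcases h1 : es1.getLast? with _ | a <;> rcases h2 : es2.getLast? with _ | b <;>
    simp only [topM, prevOf, h1, h2, Option.getD, mul_one, one_mul]
  · fin_cases f <;>
      norm_num [Matrix.trace_fin_two, Bm, ccv]
  · fin_cases f <;> fin_cases b <;>
      norm_num [Matrix.trace_fin_two, Matrix.mul_apply, Fin.sum_univ_two, Bm, cr, ccv]
  · fin_cases f <;> fin_cases a <;>
      norm_num [Matrix.trace_fin_two, Matrix.mul_apply, Fin.sum_univ_two, Bm, cr, ccv]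
  · fin_cases f <;> fin_cases a <;> fin_cases b <;>
      norm_num [Matrix.trace_fin_two, Matrix.mul_apply, Fin.sum_univ_two, Bm, cr, ccv]

lemma full_trace_coeff (es : List (Fin 2)) (hne : es ≠ []) :
    (Matrix.trace ((es.map Nt).prod)).coeff es.length = 1 := by
  rw [Matrix.trace_fin_two, coeff_add, chain_top, chain_top]
  rcases h : es.getLast? with _ | a
  · exact absurd (List.getLast?_eq_none_iff.mp h) hne
  · fin_cases a <;> norm_num [topM, h, cr]

lemma key_coeff (es1 es2 : List (Fin 2)) (f : Fin 2) :
    (Matrix.trace ((es1.map Nt).prod * (Bm f).map Polynomial.C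
        * (es2.map Nt).prod)).coeff (es1.length + es2.length)
      = ccv (prevOf es1 es2 f) f := by
  have hQentry : ∀ a b, ((es1.map Nt).prod * (Bm f).map Polynomial.C) a b
      = (es1.map Nt).prod a 0 * Polynomial.C (Bm f 0 b)
      + (es1.map Nt).prod a 1 * Polynomial.C (Bm f 1 b) := by
    intro a b
    simp [Matrix.mul_apply, Fin.sum_univ_two, Matrix.map_apply]
  have hQdeg : ∀ a b, (((es1.map Nt).prod * (Bm f).map Polynomial.C) a b).natDegree
      ≤ es1.length := by
    intro a b
    rw [hQentry]
    apply (natDegree_add_le _ _).trans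
    simp only [sup_le_iff]
    constructor <;>
      exact natDegree_mul_le.trans (by
        have h0 := chain_deg es1 a 0; have h1 := chain_deg es1 a 1
        simp only [natDegree_C, add_zero]
        first | exact h0 | exact h1)
  have hQcoeff : ∀ a b, (((es1.map Nt).prod * (Bm f).map Polynomial.C) a b).coeff es1.length
      = (topM es1 * Bm f) a b := by
    intro a b
    rw [hQentry, coeff_add, coeff_mul_C, coeff_mul_C, chain_top, chain_top]
    simp [Matrix.mul_apply, Fin.sum_univ_two]
  have hmain : ∀ a : Fin 2,
      (((es1.map Nt).prod * (Bm f).map Polynomial.C * (es2.map Nt).prod) a a).coeff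
          (es1.length + es2.length)
        = (topM es1 * Bm f * topM es2) a a := by
    intro a
    have hexp : ((es1.map Nt).prod * (Bm f).map Polynomial.C * (es2.map Nt).prod) a a
        = ((es1.map Nt).prod * (Bm f).map Polynomial.C) a 0 * (es2.map Nt).prod 0 a
        + ((es1.map Nt).prod * (Bm f).map Polynomial.C) a 1 * (es2.map Nt).prod 1 a := by
      rw [Matrix.mul_apply, Fin.sum_univ_two]
    rw [hexp, coeff_add,
      coeff_mul_add_eq_of_natDegree_le (hQdeg a 0) (chain_deg es2 0 a),
      coeff_mul_add_eq_of_natDegree_le (hQdeg a 1) (chain_deg es2 1 a),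
      hQcoeff, hQcoeff, chain_top, chain_top]
    simp [Matrix.mul_apply, Fin.sum_univ_two]
  rw [Matrix.trace_fin_two, coeff_add, hmain 0, hmain 1, ← tr_topBm es1 es2 f,
    Matrix.trace_fin_two]

section Mv

open MvPolynomial

variable {n : ℕ} (ε : Fin n → Fin 2)

noncomputable def MS (i : Fin n) : Matrix (Fin 2) (Fin 2) (MvPolynomial (Fin n) ℂ) :=
  if ε i = 0 then !![X i + 1, -1; -1, 0]
  else !![X i, - X i - 1; -1, 1]

lemma lin_deg (a b : ℂ) (i j : Fin n) :
    degreeOf j (MvPolynomial.C a * MvPolynomial.X i + MvPolynomial.C b)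
      ≤ if j = i then 1 else 0 := by
  apply (degreeOf_add_le _ _ _).trans
  simp only [sup_le_iff, degreeOf_C]
  refine ⟨(degreeOf_mul_le _ _ _).trans ?_, by positivity⟩
  simp [degreeOf_C, degreeOf_X]

lemma degreeOf_one' (j : Fin n) : degreeOf j (1 : MvPolynomial (Fin n) ℂ) = 0 := by
  simpa using degreeOf_C (1 : ℂ) j

lemma ms_deg (i j : Fin n) (a b : Fin 2) :
    degreeOf j (MS ε i a b) ≤ if j = i then 1 else 0 := by
  have hA : degreeOf j (MvPolynomial.X i + 1 : MvPolynomial (Fin n) ℂ)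
      ≤ if j = i then 1 else 0 := by
    have := lin_deg (n := n) 1 1 i j; simpa using this
  have hB : degreeOf j (-MvPolynomial.X i - 1 : MvPolynomial (Fin n) ℂ)
      ≤ if j = i then 1 else 0 := by
    have h2 : (-MvPolynomial.X i - 1 : MvPolynomial (Fin n) ℂ)
        = MvPolynomial.C (-1) * MvPolynomial.X i + MvPolynomial.C (-1) := by
      simp only [map_neg, MvPolynomial.C_1]; ring
    rw [h2]; exact lin_deg _ _ _ _
  have hX : degreeOf j (MvPolynomial.X i : MvPolynomial (Fin n) ℂ)
      ≤ if j = i then 1 else 0 := by simp [degreeOf_X]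
  have hconst : ∀ c : ℂ, degreeOf j (MvPolynomial.C c : MvPolynomial (Fin n) ℂ)
      ≤ if j = i then 1 else 0 := fun c => by simp [degreeOf_C]
  have hone : degreeOf j (1 : MvPolynomial (Fin n) ℂ) ≤ if j = i then 1 else 0 := by
    simpa using hconst 1
  have hzero : degreeOf j (0 : MvPolynomial (Fin n) ℂ) ≤ if j = i then 1 else 0 := by
    simpa using hconst 0
  have hmone : degreeOf j (-1 : MvPolynomial (Fin n) ℂ) ≤ if j = i then 1 else 0 := by
    simpa using hconst (-1)
  rcases eq_or_ne (ε i) 0 with he | he <;>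
    fin_cases a <;> fin_cases b <;>
    simp only [MS, he, reduceIte, eq_self_iff_true, ite_true, ite_false, if_true, if_false,
      Fin.isValue, Matrix.cons_val', Matrix.cons_val_zero,
      Matrix.cons_val_one, Matrix.head_cons, Matrix.empty_val', Matrix.cons_val_fin_one,
      Matrix.head_fin_const]
  exacts [hA, hmone, hmone, hzero, hX, hB, hmone, hone]

lemma deg_entries (l : List (Fin n)) (hl : l.Nodup) (j : Fin n) (a b : Fin 2) :
    degreeOf j ((l.map (MS ε)).prod a b) ≤ if j ∈ l then 1 else 0 := by
  induction l generalizing a b with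
  | nil =>
    simp only [List.map_nil, List.prod_nil, List.not_mem_nil, if_false]
    rcases eq_or_ne a b with rfl | hab
    · simp [Matrix.one_apply_eq, degreeOf_one']
    · simp [Matrix.one_apply_ne hab]
  | cons e l ih =>
    have hnd := List.nodup_cons.mp hl
    simp only [List.map_cons, List.prod_cons, Matrix.mul_apply, Fin.sum_univ_two]
    apply (degreeOf_add_le _ _ _).trans
    simp only [sup_le_iff]
    constructor <;>
    · apply (degreeOf_mul_le _ _ _).trans
      have h1 := ms_deg ε e j a
      have h2 := ih hnd.2
      by_cases hje : j = e
      · subst hje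
        have hnm : j ∉ l := hnd.1
        simp only [List.mem_cons, true_or, if_pos, if_neg hnm] at *
        have := h1 0; have := h1 1
        have := h2 (a := 0) (b := b); have := h2 (a := 1) (b := b)
        simp_all
        try omega
      · by_cases hjl : j ∈ l
        · have : j ∈ e :: l := List.mem_cons_of_mem _ hjl
          simp only [if_pos hjl, if_pos this, if_neg hje] at *
          have := h1 0; have := h1 1
          have := h2 (a := 0) (b := b); have := h2 (a := 1) (b := b)
          omega
        · have : j ∉ e :: l := by simp [hje, hjl]
          simp only [if_neg hjl, if_neg this, if_neg hje] at *
          have := h1 0; have := h1 1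
          have := h2 (a := 0) (b := b); have := h2 (a := 1) (b := b)
          omega

lemma degOf_prod_le {ι : Type*} (s : Finset ι) (f : ι → MvPolynomial (Fin n) ℂ) (j : Fin n) :
    degreeOf j (∏ i ∈ s, f i) ≤ ∑ i ∈ s, degreeOf j (f i) := by
  classical
  induction s using Finset.cons_induction with
  | empty => simp [degreeOf_one']
  | cons i s his ih =>
    rw [Finset.prod_cons, Finset.sum_cons]
    exact (degreeOf_mul_le _ _ _).trans (add_le_add le_rfl ih)

end Mv

section Extract

open MvPolynomial

variable {n : ℕ}

noncomputable def fullF : Fin n →₀ ℕ := Finsupp.equivFunOnFinite.symm fun _ => 1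

noncomputable def missF (i : Fin n) : Fin n →₀ ℕ :=
  Finsupp.equivFunOnFinite.symm fun j => if j = i then 0 else 1

lemma sum_univ_eq (v : Fin n →₀ ℕ) : (v.sum fun _ k => k) = ∑ j : Fin n, v j :=
  Finsupp.sum_fintype _ _ fun _ => rfl

lemma sum_supp_eq (v : Fin n →₀ ℕ) : ∑ j ∈ v.support, v j = ∑ j : Fin n, v j :=
  Finset.sum_subset (Finset.subset_univ _)
    (fun j _ hj => Finsupp.notMem_support_iff.mp hj)

@[simp] lemma fullF_apply (j : Fin n) : (fullF : Fin n →₀ ℕ) j = 1 := rfl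

@[simp] lemma missF_apply (i j : Fin n) : (missF i : Fin n →₀ ℕ) j = if j = i then 0 else 1 := rfl

lemma fullF_sum : ∑ j : Fin n, (fullF : Fin n →₀ ℕ) j = n := by simp

lemma missF_sum (i : Fin n) : ∑ j : Fin n, (missF i : Fin n →₀ ℕ) j = n - 1 := by
  rw [← Finset.add_sum_erase _ _ (Finset.mem_univ i)]
  have h1 : ∑ j ∈ Finset.univ.erase i, (missF i : Fin n →₀ ℕ) j
      = ∑ _j ∈ Finset.univ.erase i, 1 :=
    Finset.sum_congr rfl (fun j hj => by simp [(Finset.mem_erase.mp hj).1])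
  rw [h1]
  simp [Finset.card_erase_of_mem]

lemma eq_fullF (v : Fin n →₀ ℕ) (hv : ∀ j, v j ≤ 1) (hs : ∑ j : Fin n, v j = n) :
    v = fullF := by
  ext j
  by_contra hj
  have hj0 : v j = 0 := by have := hv j; simp only [fullF_apply] at hj; omega
  have : ∑ j : Fin n, v j ≤ n - 1 := by
    rw [← Finset.add_sum_erase _ _ (Finset.mem_univ j), hj0, zero_add]
    calc ∑ x ∈ Finset.univ.erase j, v x
        ≤ (Finset.univ.erase j).card • 1 :=
          Finset.sum_le_card_nsmul _ _ 1 fun x _ => hv x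
      _ = n - 1 := by simp [Finset.card_erase_of_mem]
  have hn : 1 ≤ n := by
    have := j.isLt; omega
  omega

lemma eq_missF (v : Fin n →₀ ℕ) (i : Fin n) (hv : ∀ j, v j ≤ 1) (hvi : v i = 0)
    (hs : ∑ j : Fin n, v j = n - 1) : v = missF i := by
  have hn : 1 ≤ n := by have := i.isLt; omega
  ext j
  by_cases hji : j = i
  · subst hji; simp [hvi]
  · simp only [missF_apply, if_neg hji]
    by_contra hj
    have hj0 : v j = 0 := by have := hv j; omega
    have h2n : 2 ≤ n := by
      have h := Fintype.one_lt_card (α := Fin n) (h := ⟨j, i, hji⟩)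
      simp at h; omega
    have : ∑ x : Fin n, v x ≤ n - 2 := by
      rw [← Finset.add_sum_erase _ _ (Finset.mem_univ i), hvi, zero_add,
        ← Finset.add_sum_erase _ _ (Finset.mem_erase.mpr ⟨hji, Finset.mem_univ j⟩), hj0,
        zero_add]
      calc ∑ x ∈ (Finset.univ.erase i).erase j, v x
          ≤ ((Finset.univ.erase i).erase j).card • 1 :=
            Finset.sum_le_card_nsmul _ _ 1 fun x _ => hv x
        _ ≤ n - 2 := by
          rw [Finset.card_erase_of_mem (Finset.mem_erase.mpr ⟨hji, Finset.mem_univ j⟩),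
            Finset.card_erase_of_mem (Finset.mem_univ i)]
          simp
          omega
    omega

lemma coeff_extract_full (R : MvPolynomial (Fin n) ℂ) (hR : ∀ j, degreeOf j R ≤ 1) :
    ((MvPolynomial.aeval fun _ : Fin n => (Polynomial.X : Polynomial ℂ)) R).coeff n
      = MvPolynomial.coeff fullF R := by
  have hv : ∀ v ∈ R.support, ∀ j, v j ≤ 1 := fun v hv j =>
    degreeOf_le_iff.mp (hR j) v hv
  conv_lhs => rw [MvPolynomial.as_sum R]
  rw [map_sum, Polynomial.finset_sum_coeff]
  have hterm : ∀ v ∈ R.support,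
      ((MvPolynomial.aeval fun _ : Fin n => (Polynomial.X : Polynomial ℂ)) (monomial v (coeff v R))).coeff n
        = if v = fullF then coeff v R else 0 := by
    intro v hvm
    rw [MvPolynomial.aeval_monomial]
    have hprod : (v.prod fun _ k => (Polynomial.X : Polynomial ℂ) ^ k)
        = Polynomial.X ^ (∑ j : Fin n, v j) := by
      rw [Finsupp.prod, Finset.prod_pow_eq_pow_sum, sum_supp_eq]
    rw [hprod]
    simp only [Polynomial.algebraMap_eq, Polynomial.coeff_C_mul, Polynomial.coeff_X_pow]
    have hiff : (n = ∑ j : Fin n, v j) ↔ v = fullF := by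
      constructor
      · intro h; exact eq_fullF v (hv v hvm) h.symm
      · rintro rfl; exact fullF_sum.symm
    by_cases h : v = fullF
    · rw [if_pos (hiff.mpr h), if_pos h, mul_one]
    · rw [if_neg (fun hh => h (hiff.mp hh)), if_neg h, mul_zero]
  rw [Finset.sum_congr rfl hterm, Finset.sum_ite_eq' R.support fullF (fun v => coeff v R)]
  by_cases hf : fullF ∈ R.support
  · rw [if_pos hf]
  · rw [if_neg hf, eq_comm]
    exact Finsupp.notMem_support_iff.mp hf

lemma coeff_extract_miss (R : MvPolynomial (Fin n) ℂ) (hR : ∀ j, degreeOf j R ≤ 1)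
    (i : Fin n) :
    ((MvPolynomial.aeval fun j : Fin n => if j = i then 0 else (Polynomial.X : Polynomial ℂ)) R).coeff (n - 1)
      = MvPolynomial.coeff (missF i) R := by
  have hv : ∀ v ∈ R.support, ∀ j, v j ≤ 1 := fun v hv j =>
    degreeOf_le_iff.mp (hR j) v hv
  conv_lhs => rw [MvPolynomial.as_sum R]
  rw [map_sum, Polynomial.finset_sum_coeff]
  have hterm : ∀ v ∈ R.support,
      ((MvPolynomial.aeval fun j : Fin n => if j = i then 0 else (Polynomial.X : Polynomial ℂ))
          (monomial v (coeff v R))).coeff (n - 1)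
        = if v = missF i then coeff v R else 0 := by
    intro v hvm
    rw [MvPolynomial.aeval_monomial]
    by_cases hi : i ∈ v.support
    · have : (v.prod fun j k => (if j = i then 0 else (Polynomial.X : Polynomial ℂ)) ^ k)
          = 0 := by
        apply Finset.prod_eq_zero hi
        show (if i = i then (0 : Polynomial ℂ) else Polynomial.X) ^ (v i) = 0
        rw [if_pos rfl]
        exact zero_pow (Finsupp.mem_support_iff.mp hi)
      rw [this, mul_zero, Polynomial.coeff_zero, eq_comm, if_neg]
      intro hvm2
      have : v i = 0 := by rw [hvm2]; simp
      exact (Finsupp.mem_support_iff.mp hi) this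
    · have hvi : v i = 0 := Finsupp.notMem_support_iff.mp hi
      have hprod : (v.prod fun j k => (if j = i then 0 else (Polynomial.X : Polynomial ℂ)) ^ k)
          = Polynomial.X ^ (∑ j : Fin n, v j) := by
        have hfac : ∀ j ∈ v.support,
            (fun j k => (if j = i then (0 : Polynomial ℂ) else Polynomial.X) ^ k) j (v j)
              = Polynomial.X ^ (v j) := by
          intro j hj
          have hji : j ≠ i := fun hji => hi (hji ▸ hj)
          simp [hji]
        rw [Finsupp.prod, Finset.prod_congr rfl hfac,
          Finset.prod_pow_eq_pow_sum, sum_supp_eq]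
      rw [hprod]
      simp only [Polynomial.algebraMap_eq, Polynomial.coeff_C_mul, Polynomial.coeff_X_pow]
      have hiff : (n - 1 = ∑ j : Fin n, v j) ↔ v = missF i := by
        constructor
        · intro h; exact eq_missF v i (hv v hvm) hvi h.symm
        · rintro rfl; exact (missF_sum i).symm
      by_cases h : v = missF i
      · rw [if_pos (hiff.mpr h), if_pos h, mul_one]
      · rw [if_neg (fun hh => h (hiff.mp hh)), if_neg h, mul_zero]
  rw [Finset.sum_congr rfl hterm, Finset.sum_ite_eq' R.support (missF i) (fun v => coeff v R)]
  by_cases hf : missF i ∈ R.support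
  · rw [if_pos hf]
  · rw [if_neg hf, eq_comm]
    exact Finsupp.notMem_support_iff.mp hf

lemma totalDegree_le_of_top_vanish (R : MvPolynomial (Fin n) ℂ)
    (hR : ∀ j, degreeOf j R ≤ 1)
    (hfull : MvPolynomial.coeff fullF R = 0)
    (hmiss : ∀ i, MvPolynomial.coeff (missF i) R = 0) :
    R.totalDegree ≤ n - 2 := by
  apply Finset.sup_le
  intro v hvm
  rw [sum_univ_eq]
  have hv : ∀ j, v j ≤ 1 := fun j => degreeOf_le_iff.mp (hR j) v hvm
  by_contra hbig
  push_neg at hbig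
  have hle : ∑ j : Fin n, v j ≤ n := by
    calc ∑ j : Fin n, v j ≤ Finset.univ.card • 1 :=
          Finset.sum_le_card_nsmul _ _ 1 fun x _ => hv x
      _ = n := by simp
  rcases Nat.lt_or_ge (∑ j : Fin n, v j) n with hlt | hge
  · -- sum = n - 1 (or n ≤ 1 edge cases) : find i with v i = 0
    have hex : ∃ i, v i = 0 := by
      by_contra hno
      push_neg at hno
      have : ∀ j : Fin n, v j = 1 := fun j => by have := hv j; have := hno j; omega
      have : ∑ j : Fin n, v j = n := by
        rw [Finset.sum_congr rfl (fun j _ => this j)]; simp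
      omega
    obtain ⟨i, hi⟩ := hex
    have hn1 : 1 ≤ n := by have := i.isLt; omega
    have hsum : ∑ j : Fin n, v j = n - 1 := by
      -- from n-2 < sum < n
      rcases Nat.lt_or_ge (∑ j : Fin n, v j) (n - 1) with h | h
      · omega
      · omega
    have := eq_missF v i hv hi hsum
    subst this
    exact (Finsupp.mem_support_iff.mp hvm) (hmiss i)
  · have hsum : ∑ j : Fin n, v j = n := le_antisymm hle hge
    have := eq_fullF v hv hsum
    subst this
    exact (Finsupp.mem_support_iff.mp hvm) hfull

end Extract

section Bridge

open MvPolynomial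

variable {n : ℕ} [NeZero n] (ε : Fin n → Fin 2)

noncomputable def Tpoly : MvPolynomial (Fin n) ℂ :=
  Matrix.trace (((List.finRange n).map (MS ε)).prod)

noncomputable def cv (j : Fin n) : ℂ := ccv (ε (j - 1)) (ε j)

noncomputable def Rpoly : MvPolynomial (Fin n) ℂ :=
  Tpoly ε - ∏ j : Fin n, (MvPolynomial.X j + MvPolynomial.C (cv ε j))

lemma map_trace_prod {A : Type*} [CommRing A] (φ : MvPolynomial (Fin n) ℂ →+* A)
    (l : List (Fin n)) :
    φ (Matrix.trace ((l.map (MS ε)).prod))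
      = Matrix.trace ((l.map fun j => (MS ε j).map φ).prod) := by
  have h1 : φ.mapMatrix ((l.map (MS ε)).prod) = (l.map fun j => (MS ε j).map φ).prod := by
    rw [map_list_prod φ.mapMatrix, List.map_map]
    first
      | rfl
      | · congr 1
          exact List.map_congr_left fun j _ => RingHom.mapMatrix_apply φ (MS ε j)
  rw [← h1, Matrix.trace_fin_two, Matrix.trace_fin_two, map_add]
  simp [RingHom.mapMatrix_apply, Matrix.map_apply]

noncomputable def phiX : MvPolynomial (Fin n) ℂ →+* Polynomial ℂ :=
  (MvPolynomial.aeval fun _ : Fin n => (Polynomial.X : Polynomial ℂ)).toRingHom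

noncomputable def phiM (i : Fin n) : MvPolynomial (Fin n) ℂ →+* Polynomial ℂ :=
  (MvPolynomial.aeval fun j : Fin n =>
    if j = i then 0 else (Polynomial.X : Polynomial ℂ)).toRingHom

@[simp] lemma phiX_apply (p : MvPolynomial (Fin n) ℂ) :
    phiX p = (MvPolynomial.aeval fun _ : Fin n => (Polynomial.X : Polynomial ℂ)) p := rfl

@[simp] lemma phiM_apply (i : Fin n) (p : MvPolynomial (Fin n) ℂ) :
    phiM i p = (MvPolynomial.aeval fun j : Fin n =>
      if j = i then 0 else (Polynomial.X : Polynomial ℂ)) p := rfl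

lemma map_ms_X (i : Fin n) : (MS ε i).map (phiX (n := n)) = Nt (ε i) := by
  rcases eq_or_ne (ε i) 0 with he | he <;>
    · ext a b
      fin_cases a <;> fin_cases b <;>
        simp [MS, Nt, he, Matrix.map_apply]

lemma map_ms_psi_ne (i j : Fin n) (hji : j ≠ i) :
    (MS ε j).map (phiM (n := n) i) = Nt (ε j) := by
  rcases eq_or_ne (ε j) 0 with he | he <;>
    · ext a b
      fin_cases a <;> fin_cases b <;>
        simp [MS, Nt, he, hji, Matrix.map_apply]

lemma map_ms_psi_eq (i : Fin n) :
    (MS ε i).map (phiM (n := n) i) = (Bm (ε i)).map Polynomial.C := by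
  rcases eq_or_ne (ε i) 0 with he | he <;>
    · ext a b
      fin_cases a <;> fin_cases b <;>
        simp [MS, Bm, he, Matrix.map_apply]

lemma T_coeff_full (hn : 1 ≤ n) : (phiX (Tpoly ε)).coeff n = 1 := by
  rw [Tpoly, map_trace_prod]
  have hmap : ((List.finRange n).map fun j => (MS ε j).map (phiX (n := n)))
      = ((List.finRange n).map ε).map Nt := by
    rw [List.map_map]
    exact List.map_congr_left fun j _ => map_ms_X ε j
  rw [hmap]
  have hne : (List.finRange n).map ε ≠ [] := by
    intro hcon
    have := congrArg List.length hcon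
    simp at this
    omega
  simpa using full_trace_coeff _ hne

lemma fin_sub_one_val (hn : 1 ≤ n) (i : Fin n) :
    ((i - 1 : Fin n) : ℕ) = if (i : ℕ) = 0 then n - 1 else (i : ℕ) - 1 := by
  rw [Fin.sub_def]
  rcases Nat.lt_or_ge n 2 with h2 | h2
  · -- n = 1
    have hn1 : n = 1 := by omega
    subst hn1
    have : (i : ℕ) = 0 := by omega
    simp [this]
  · have h1 : ((1 : Fin n) : ℕ) = 1 := by
      rcases n with _ | m
      · omega
      · rw [Fin.val_one']
        exact Nat.mod_eq_of_lt (by omega)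
    rw [h1]
    by_cases h0 : (i : ℕ) = 0
    · simp only [h0, if_pos rfl, add_zero]
      exact Nat.mod_eq_of_lt (by omega)
    · rw [if_neg h0]
      have hi := i.isLt
      show (n - 1 + (i : ℕ)) % n = (i : ℕ) - 1
      rw [show n - 1 + (i : ℕ) = n + ((i : ℕ) - 1) from by omega, Nat.add_mod_left]
      exact Nat.mod_eq_of_lt (by omega)

lemma T_coeff_miss (hn : 1 ≤ n) (i : Fin n) :
    (phiM i (Tpoly ε)).coeff (n - 1) = cv ε i := by
  set t := (List.finRange n).take (i : ℕ) with ht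
  set d := (List.finRange n).drop ((i : ℕ) + 1) with hd
  have hi : (i : ℕ) < (List.finRange n).length := by simpa using i.isLt
  have hget : (List.finRange n)[(i : ℕ)] = i := by
    apply Fin.ext
    simp [List.getElem_finRange]
  have hsplit : List.finRange n = t ++ i :: d := by
    conv_lhs => rw [← List.take_append_drop (i : ℕ) (List.finRange n)]
    rw [List.drop_eq_getElem_cons hi, hget]
  have hnd := List.nodup_finRange n
  rw [hsplit] at hnd
  obtain ⟨hnt, hnid, hdisj⟩ := List.nodup_append'.mp hnd
  have hit : i ∉ t := fun hmem => hdisj hmem List.mem_cons_self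
  have hid : i ∉ d := (List.nodup_cons.mp hnid).1
  have hlen_t : t.length = (i : ℕ) := by
    simp only [ht, List.length_take, List.length_finRange]
    omega
  have hlen_d : d.length = n - ((i : ℕ) + 1) := by
    simp [hd]
  have hmapped : (List.finRange n).map (fun j => (MS ε j).map (phiM (n := n) i))
      = (t.map ε).map Nt ++ ((Bm (ε i)).map Polynomial.C :: (d.map ε).map Nt) := by
    rw [hsplit, List.map_append, List.map_cons, map_ms_psi_eq, List.map_map, List.map_map]
    congr 1
    · exact List.map_congr_left fun j hj => map_ms_psi_ne ε i j (fun h => hit (h ▸ hj))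
    · congr 1
      exact List.map_congr_left fun j hj => map_ms_psi_ne ε i j (fun h => hid (h ▸ hj))
  have hprev : prevOf (t.map ε) (d.map ε) (ε i) = ε (i - 1) := by
    rw [prevOf, List.getLast?_map, List.getLast?_map]
    by_cases h0 : (i : ℕ) = 0
    · have htnil : t = [] := List.eq_nil_of_length_eq_zero (by omega)
      rw [htnil]
      simp only [List.getLast?_nil, Option.map_none, Option.getD_none]
      by_cases h1 : n = 1
      · have hdnil : d = [] := List.eq_nil_of_length_eq_zero (by omega)
        rw [hdnil]
        simp only [List.getLast?_nil, Option.map_none, Option.getD_none]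
        congr 1
        apply Fin.ext
        rw [fin_sub_one_val hn, if_pos h0]
        omega
      · have hdlen : d.length - 1 < d.length := by omega
        have hlast : d.getLast? = some (⟨n - 1, by omega⟩ : Fin n) := by
          rw [List.getLast?_eq_getElem?, List.getElem?_eq_getElem hdlen]
          congr 1
          apply Fin.ext
          have : d[d.length - 1] = (List.finRange n)[(i : ℕ) + 1 + (d.length - 1)]'(by
              simp only [List.length_finRange]; omega) := by
            simp [hd, List.getElem_drop]
          rw [this]
          simp [List.getElem_finRange]
          omega
        rw [hlast]
        simp only [Option.map_some, Option.getD_some]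
        congr 1
        apply Fin.ext
        rw [fin_sub_one_val hn]
        simp [h0]
    · have htlen : t.length - 1 < t.length := by omega
      have hlast : t.getLast? = some (⟨(i : ℕ) - 1, by omega⟩ : Fin n) := by
        rw [List.getLast?_eq_getElem?, List.getElem?_eq_getElem htlen]
        congr 1
        apply Fin.ext
        have : t[t.length - 1] = (List.finRange n)[t.length - 1]'(by
            simp only [List.length_finRange]; omega) := by
          simp [ht, List.getElem_take]
        rw [this]
        simp [List.getElem_finRange]
        omega
      rw [hlast]
      simp only [Option.map_some, Option.getD_some]
      congr 1
      apply Fin.ext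
      rw [fin_sub_one_val hn]
      simp [h0]
  rw [Tpoly, map_trace_prod, hmapped, List.prod_append, List.prod_cons, ← mul_assoc]
  have hidx : n - 1 = (t.map ε).length + (d.map ε).length := by
    simp only [List.length_map, hlen_t, hlen_d]
    have := i.isLt
    omega
  rw [hidx, key_coeff, hprev, cv]

end Bridge

section Main

open MvPolynomial

variable {n : ℕ} [NeZero n] (ε : Fin n → Fin 2)

lemma deg_T (j : Fin n) : degreeOf j (Tpoly ε) ≤ 1 := by
  rw [Tpoly, Matrix.trace_fin_two]
  apply (degreeOf_add_le _ _ _).trans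
  have h0 := deg_entries ε (List.finRange n) (List.nodup_finRange n) j 0 0
  have h1 := deg_entries ε (List.finRange n) (List.nodup_finRange n) j 1 1
  rw [if_pos (List.mem_finRange j)] at h0 h1
  exact sup_le h0 h1

lemma deg_prod_cv (j : Fin n) :
    degreeOf j (∏ t : Fin n, (MvPolynomial.X t + MvPolynomial.C (cv ε t))) ≤ 1 := by
  apply (degOf_prod_le Finset.univ _ j).trans
  have hterm : ∀ t : Fin n,
      degreeOf j (MvPolynomial.X t + MvPolynomial.C (cv ε t)) ≤ if j = t then 1 else 0 := by
    intro t
    apply (degreeOf_add_le _ _ _).trans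
    simp [degreeOf_X, degreeOf_C]
  calc ∑ t : Fin n, degreeOf j (MvPolynomial.X t + MvPolynomial.C (cv ε t))
      ≤ ∑ t : Fin n, if j = t then 1 else 0 := Finset.sum_le_sum fun t _ => hterm t
    _ ≤ 1 := by rw [Finset.sum_ite_eq]; simp

lemma deg_R (j : Fin n) : degreeOf j (Rpoly ε) ≤ 1 := by
  rw [Rpoly]
  exact (degreeOf_sub_le _ _ _).trans (sup_le (deg_T ε j) (deg_prod_cv ε j))

lemma prodX_coeff_full :
    (phiX (n := n) (∏ t : Fin n, (MvPolynomial.X t + MvPolynomial.C (cv ε t)))).coeff n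
      = 1 := by
  have hmap : phiX (n := n) (∏ t : Fin n, (MvPolynomial.X t + MvPolynomial.C (cv ε t)))
      = ∏ t : Fin n, (Polynomial.X + Polynomial.C (cv ε t)) := by
    rw [map_prod]
    exact Finset.prod_congr rfl fun t _ => by simp [Polynomial.algebraMap_eq]
  rw [hmap]
  have h1 : ∀ t ∈ (Finset.univ : Finset (Fin n)),
      (Polynomial.X + Polynomial.C (cv ε t)).natDegree ≤ 1 := fun t _ => by
    apply (Polynomial.natDegree_add_le _ _).trans
    simp [Polynomial.natDegree_X, Polynomial.natDegree_C]
  have hh := Polynomial.coeff_prod_of_natDegree_le Finset.univ _ 1 h1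
  have hcard : (Finset.univ : Finset (Fin n)).card * 1 = n := by simp
  rw [hcard] at hh
  rw [hh]
  apply Finset.prod_eq_one
  intro t _
  simp [Polynomial.coeff_add, Polynomial.coeff_X_one, Polynomial.coeff_C]

lemma prodX_coeff_miss (i : Fin n) :
    (phiM (n := n) i (∏ t : Fin n,
      (MvPolynomial.X t + MvPolynomial.C (cv ε t)))).coeff (n - 1) = cv ε i := by
  have hmap : phiM (n := n) i (∏ t : Fin n, (MvPolynomial.X t + MvPolynomial.C (cv ε t)))
      = Polynomial.C (cv ε i)
        * ∏ t ∈ Finset.univ.erase i, (Polynomial.X + Polynomial.C (cv ε t)) := by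
    rw [map_prod, ← Finset.mul_prod_erase Finset.univ _ (Finset.mem_univ i)]
    congr 1
    · simp [Polynomial.algebraMap_eq]
    · exact Finset.prod_congr rfl fun t ht => by
        simp [Polynomial.algebraMap_eq, (Finset.mem_erase.mp ht).1]
  rw [hmap, Polynomial.coeff_C_mul]
  have h1 : ∀ t ∈ Finset.univ.erase i,
      (Polynomial.X + Polynomial.C (cv ε t)).natDegree ≤ 1 := fun t _ => by
    apply (Polynomial.natDegree_add_le _ _).trans
    simp [Polynomial.natDegree_X, Polynomial.natDegree_C]
  have hh := Polynomial.coeff_prod_of_natDegree_le (Finset.univ.erase i) _ 1 h1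
  have hcard : (Finset.univ.erase i).card * 1 = n - 1 := by
    simp [Finset.card_erase_of_mem]
  rw [hcard] at hh
  rw [hh]
  have : ∀ t ∈ Finset.univ.erase i,
      (Polynomial.X + Polynomial.C (cv ε t)).coeff 1 = 1 := fun t _ => by
    simp [Polynomial.coeff_add, Polynomial.coeff_X_one, Polynomial.coeff_C]
  rw [Finset.prod_congr rfl this]
  simp

lemma R_coeff_full (hn : 1 ≤ n) : MvPolynomial.coeff fullF (Rpoly ε) = 0 := by
  rw [← coeff_extract_full _ (deg_R ε)]
  have h0 : ((MvPolynomial.aeval fun _ : Fin n => (Polynomial.X : Polynomial ℂ))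
      (Rpoly ε)).coeff n = (phiX (Rpoly ε)).coeff n := rfl
  rw [h0, Rpoly, map_sub, Polynomial.coeff_sub, T_coeff_full ε hn, prodX_coeff_full ε]
  ring

lemma R_coeff_miss (hn : 1 ≤ n) (i : Fin n) :
    MvPolynomial.coeff (missF i) (Rpoly ε) = 0 := by
  rw [← coeff_extract_miss _ (deg_R ε) i]
  have h0 : ((MvPolynomial.aeval fun j : Fin n =>
      if j = i then 0 else (Polynomial.X : Polynomial ℂ)) (Rpoly ε)).coeff (n - 1)
      = (phiM i (Rpoly ε)).coeff (n - 1) := rfl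
  rw [h0, Rpoly, map_sub, Polynomial.coeff_sub, T_coeff_miss ε hn i, prodX_coeff_miss ε i]
  ring

lemma R_totdeg (hn : 1 ≤ n) : (Rpoly ε).totalDegree ≤ n - 2 :=
  totalDegree_le_of_top_vanish _ (deg_R ε) (R_coeff_full ε hn) (fun i => R_coeff_miss ε hn i)

lemma ms_map_eval (Xv : Fin n → ℂ) (j : Fin n) :
    (MS ε j).map (MvPolynomial.eval Xv)
      = !![1, Xv j; 0, -1] * (if ε j = 0 then !![1, -1; 1, 0] else !![0, -1; 1, -1]) := by
  rcases eq_or_ne (ε j) 0 with he | he <;>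
    · ext a b
      fin_cases a <;> fin_cases b <;>
        · simp [MS, he, Matrix.map_apply, Matrix.mul_apply, Fin.sum_univ_two]
          try ring

lemma eval_T (Xv : Fin n → ℂ) :
    MvPolynomial.eval Xv (Tpoly ε)
      = (((List.finRange n).map (fun j => (!![1, Xv j; 0, -1] : Matrix (Fin 2) (Fin 2) ℂ) *
          (if ε j = 0 then !![1, -1; 1, 0] else !![0, -1; 1, -1]))).prod).trace := by
  rw [Tpoly, map_trace_prod ε (MvPolynomial.eval Xv),
    List.map_congr_left fun j _ => ms_map_eval ε Xv j]

theorem main_aux (hn : 1 ≤ n) (Xv : Fin n → ℂ) :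
    (((List.finRange n).map (fun j => (!![1, Xv j; 0, -1] : Matrix (Fin 2) (Fin 2) ℂ) *
        (if ε j = 0 then !![1, -1; 1, 0] else !![0, -1; 1, -1]))).prod).trace
      = (∏ j : Fin n, (Xv j + cv ε j)) + MvPolynomial.eval Xv (Rpoly ε) := by
  rw [← eval_T ε Xv, Rpoly, map_sub]
  have hp : MvPolynomial.eval Xv (∏ j : Fin n, (MvPolynomial.X j + MvPolynomial.C (cv ε j)))
      = ∏ j : Fin n, (Xv j + cv ε j) := by
    rw [map_prod]
    exact Finset.prod_congr rfl fun j _ => by simp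
  rw [hp]
  ring

end Main

end NoScc



/-- Trace of holonomy products (no scc-arcs case).  With
`A_X = [[1,X],[0,-1]]`, `Ω₀ = [[1,-1],[1,0]]`, `Ω₁ = [[0,-1],[1,-1]]`:
for any `n ≥ 1` and any `ε : Fin n → Fin 2`, there is a sign `±1` and a
polynomial `R` in `X₁,…,Xₙ` of total degree at most `n-2` and degree at most
`1` in each variable, such that for all `X₁,…,Xₙ ∈ ℂ`,
`Tr(∏ⱼ A_{Xⱼ}·Ω_{εⱼ}) = ±(∏ⱼ Xⱼ*) + R(X)`, where
`Xⱼ* = Xⱼ + h(εⱼ) + k(ε_{j-1})` (indices cyclic), `h(0)=1, h(1)=0`,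
`k(0)=0, k(1)=1`. -/
theorem trace_top_term_no_scc (n : ℕ) (hn : 1 ≤ n) (ε : Fin n → Fin 2) :
    let Aa : ℂ → Matrix (Fin 2) (Fin 2) ℂ := fun X => !![1, X; 0, -1]
    let Om : Fin 2 → Matrix (Fin 2) (Fin 2) ℂ :=
      fun e => if e = 0 then !![1, -1; 1, 0] else !![0, -1; 1, -1]
    let h : Fin 2 → ℂ := fun e => if e = 0 then 1 else 0
    let k : Fin 2 → ℂ := fun e => if e = 0 then 0 else 1
    haveI : NeZero n := ⟨Nat.one_le_iff_ne_zero.mp hn⟩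
    ∃ (s : ℂ) (R : MvPolynomial (Fin n) ℂ),
      (s = 1 ∨ s = -1) ∧
      R.totalDegree ≤ n - 2 ∧
      (∀ j : Fin n, R.degreeOf j ≤ 1) ∧
      ∀ X : Fin n → ℂ,
        (((List.finRange n).map (fun j => Aa (X j) * Om (ε j))).prod).trace
          = s * (∏ j : Fin n, (X j + h (ε j) + k (ε (j - 1))))
            + MvPolynomial.eval X R := by
  intro Aa Om h k
  haveI : NeZero n := ⟨Nat.one_le_iff_ne_zero.mp hn⟩
  refine ⟨1, NoScc.Rpoly ε, Or.inl rfl, NoScc.R_totdeg ε hn, NoScc.deg_R ε, ?_⟩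
  intro Xv
  have hprod : (∏ j : Fin n, (Xv j + h (ε j) + k (ε (j - 1))))
      = ∏ j : Fin n, (Xv j + NoScc.cv ε j) := by
    refine Finset.prod_congr rfl fun j _ => ?_
    show Xv j + (if ε j = 0 then 1 else 0) + (if ε (j - 1) = 0 then 0 else 1)
        = Xv j + ((if ε j = 0 then 1 else 0) + (if ε (j - 1) = 0 then 0 else 1))
    ring
  rw [one_mul, hprod]
  exact NoScc.main_aux ε hn Xv
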